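/- Let f : (0,1) → (0,∞) be continuous with F(θ) := ∫₀^θ f(z) dz satisfying F(θ) < 1 for all θ ∈ (0,1). If the function θ ↦ θ·f(θ)/(1−F(θ)) is nondecreasing on (0,1), then lim_{θ → 0⁺} θ·f(θ)/(1−F(θ)) = 0. -/
import Mathlib


open MeasureTheory Filter

noncomputable section

theorem stmt16
    (f : ℝ → ℝ)
    (hf_cont : ContinuousOn f (Set.Ioo 0 1))
    (hf_pos : ∀ z ∈ Set.Ioo (0:ℝ) 1, 0 < f z)
    -- F(θ) = ∫₀^θ f is well defined
    (hfint : ∀ θ ∈ Set.Ioo (0:ℝ) 1, IntervalIntegrable f volume 0 θ)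
    (F : ℝ → ℝ) (hF : ∀ θ : ℝ, F θ = ∫ z in (0:ℝ)..θ, f z)
    (hFlt : ∀ θ ∈ Set.Ioo (0:ℝ) 1, F θ < 1)
    -- the type-weighted hazard rate is nondecreasing on (0,1)
    (hmono : MonotoneOn (fun θ : ℝ => θ * f θ / (1 - F θ)) (Set.Ioo 0 1)) :
    Tendsto (fun θ : ℝ => θ * f θ / (1 - F θ)) (nhdsWithin 0 (Set.Ioo 0 1)) (nhds 0) := by
  set g : ℝ → ℝ := fun θ : ℝ => θ * f θ / (1 - F θ) with hg
  -- 1 - F θ > 0 on (0,1)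
  have hFpos : ∀ θ ∈ Set.Ioo (0:ℝ) 1, 0 < 1 - F θ := fun θ hθ => by
    linarith [hFlt θ hθ]
  -- g ≥ 0 on (0,1)
  have hgnn : ∀ θ ∈ Set.Ioo (0:ℝ) 1, 0 ≤ g θ := fun θ hθ => by
    have := hf_pos θ hθ
    have := hFpos θ hθ
    have := hθ.1
    positivity
  -- F is monotone on (0,1)
  have hFmono : ∀ θ₁ ∈ Set.Ioo (0:ℝ) 1, ∀ θ₂ ∈ Set.Ioo (0:ℝ) 1, θ₁ ≤ θ₂ → F θ₁ ≤ F θ₂ := by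
    intro θ₁ h₁ θ₂ h₂ hle
    have hsub : F θ₂ - F θ₁ = ∫ z in θ₁..θ₂, f z := by
      rw [hF, hF, intervalIntegral.integral_interval_sub_left (hfint θ₂ h₂) (hfint θ₁ h₁)]
    have hnn : 0 ≤ ∫ z in θ₁..θ₂, f z := by
      apply intervalIntegral.integral_nonneg hle
      intro u hu
      exact le_of_lt (hf_pos u ⟨lt_of_lt_of_le h₁.1 hu.1, lt_of_le_of_lt hu.2 h₂.2⟩)
    linarith
  -- key: the infimum of g is 0, i.e. for every ε > 0 there is θ₀ with g θ₀ < ε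
  have key : ∀ ε : ℝ, 0 < ε → ∃ θ₀ ∈ Set.Ioo (0:ℝ) 1, g θ₀ < ε := by
    intro ε hε
    by_contra hcon
    push_neg at hcon
    set c : ℝ := 1/2 with hc
    have hcmem : c ∈ Set.Ioo (0:ℝ) 1 := by constructor <;> norm_num
    have hFc : 0 < 1 - F c := hFpos c hcmem
    set K : ℝ := ε * (1 - F c) with hKdef
    have hK : 0 < K := by positivity
    -- f θ ≥ K / θ for θ ∈ (0, c]
    have hfK : ∀ θ ∈ Set.Ioc (0:ℝ) c, K / θ ≤ f θ := by
      intro θ hθ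
      have hθI : θ ∈ Set.Ioo (0:ℝ) 1 := ⟨hθ.1, lt_of_le_of_lt hθ.2 (by norm_num)⟩
      have h1 : ε ≤ θ * f θ / (1 - F θ) := hcon θ hθI
      have h2 : 0 < 1 - F θ := hFpos θ hθI
      have h3 : ε * (1 - F θ) ≤ θ * f θ := by
        rw [le_div_iff₀ h2] at h1; exact h1
      have h4 : F θ ≤ F c := hFmono θ hθI c hcmem hθ.2
      have h5 : K ≤ θ * f θ := by
        have : K ≤ ε * (1 - F θ) := by
          rw [hKdef]; nlinarith
        linarith
      rw [div_le_iff₀ hθ.1]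
      linarith [h5]
    -- choose δ small
    set δ : ℝ := min (c/2) (c * Real.exp (-(F c + 1) / K)) with hδdef
    have hδpos : 0 < δ := lt_min (by norm_num) (by positivity)
    have hδc : δ ≤ c / 2 := min_le_left _ _
    have hδc' : δ < c := lt_of_le_of_lt hδc (by norm_num)
    -- integrability on [δ, c]
    have hintc : IntervalIntegrable f volume 0 c := hfint c hcmem
    have hintδc : IntervalIntegrable f volume δ c := by
      apply hintc.mono_set
      rw [Set.uIcc_of_le (le_of_lt hδc'), Set.uIcc_of_le (by norm_num : (0:ℝ) ≤ c)]
      exact Set.Icc_subset_Icc (le_of_lt hδpos) le_rfl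
    have hint0δ : IntervalIntegrable f volume 0 δ := by
      apply hintc.mono_set
      rw [Set.uIcc_of_le (le_of_lt hδpos), Set.uIcc_of_le (by norm_num : (0:ℝ) ≤ c)]
      exact Set.Icc_subset_Icc le_rfl (le_of_lt hδc')
    -- F c = ∫₀^δ + ∫_δ^c
    have hsplit : F c = (∫ z in (0:ℝ)..δ, f z) + ∫ z in δ..c, f z := by
      rw [hF, ← intervalIntegral.integral_add_adjacent_intervals hint0δ hintδc]
    -- ∫₀^δ f ≥ 0
    have h0δ : 0 ≤ ∫ z in (0:ℝ)..δ, f z := by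
      apply intervalIntegral.integral_nonneg_of_ae_restrict (le_of_lt hδpos)
      rw [← Measure.restrict_congr_set MeasureTheory.Ioc_ae_eq_Icc]
      filter_upwards [ae_restrict_mem measurableSet_Ioc] with x hx
      exact le_of_lt (hf_pos x ⟨hx.1, lt_of_le_of_lt hx.2 (lt_of_lt_of_le hδc' (by norm_num))⟩)
    -- ∫_δ^c f ≥ ∫_δ^c K/θ
    have hKint : IntervalIntegrable (fun θ : ℝ => K / θ) volume δ c := by
      apply ContinuousOn.intervalIntegrable
      apply ContinuousOn.div continuousOn_const continuousOn_id
      intro x hx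
      rw [Set.uIcc_of_le (le_of_lt hδc')] at hx
      exact ne_of_gt (lt_of_lt_of_le hδpos hx.1)
    have hmono' : ∫ z in δ..c, (fun θ : ℝ => K / θ) z ≤ ∫ z in δ..c, f z := by
      apply intervalIntegral.integral_mono_on (le_of_lt hδc') hKint hintδc
      intro x hx
      exact hfK x ⟨lt_of_lt_of_le hδpos hx.1, hx.2⟩
    -- compute ∫_δ^c K/θ
    have hcomp : ∫ z in δ..c, (fun θ : ℝ => K / θ) z = K * Real.log (c / δ) := by
      simp only [div_eq_mul_inv]
      rw [intervalIntegral.integral_const_mul, integral_inv_of_pos hδpos hcmem.1,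
        div_eq_mul_inv]
    -- K * log(c/δ) ≥ F c + 1
    have hlog : F c + 1 ≤ K * Real.log (c / δ) := by
      have hδle : δ ≤ c * Real.exp (-(F c + 1) / K) := min_le_right _ _
      have hexp : Real.exp ((F c + 1) / K) ≤ c / δ := by
        rw [le_div_iff₀ hδpos]
        calc Real.exp ((F c + 1) / K) * δ
            ≤ Real.exp ((F c + 1) / K) * (c * Real.exp (-(F c + 1) / K)) := by
              apply mul_le_mul_of_nonneg_left hδle (le_of_lt (Real.exp_pos _))
          _ = c := by
              rw [neg_div, Real.exp_neg]
              field_simp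
      have hlog2 : (F c + 1) / K ≤ Real.log (c / δ) := by
        have := Real.log_le_log (Real.exp_pos _) hexp
        rwa [Real.log_exp] at this
      calc F c + 1 = K * ((F c + 1) / K) := by field_simp
        _ ≤ K * Real.log (c / δ) := mul_le_mul_of_nonneg_left hlog2 (le_of_lt hK)
    -- contradiction
    have : F c + 1 ≤ F c := by
      calc F c + 1 ≤ K * Real.log (c / δ) := hlog
        _ = ∫ z in δ..c, (fun θ : ℝ => K / θ) z := hcomp.symm
        _ ≤ ∫ z in δ..c, f z := hmono'
        _ ≤ F c := by linarith [hsplit, h0δ]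
    linarith
  -- conclude tendsto via squeezing by monotonicity
  rw [Metric.tendsto_nhdsWithin_nhds]
  intro ε hε
  obtain ⟨θ₀, hθ₀, hgθ₀⟩ := key ε hε
  refine ⟨θ₀, hθ₀.1, ?_⟩
  intro x hx hdist
  rw [Real.dist_eq, sub_zero, abs_lt] at hdist
  have hxθ₀ : x ≤ θ₀ := le_of_lt hdist.2
  have hgle : g x ≤ g θ₀ := hmono hx hθ₀ hxθ₀
  rw [Real.dist_eq, sub_zero, abs_of_nonneg (hgnn x hx)]
  exact lt_of_le_of_lt hgle hgθ₀
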